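/- Let n ≥ 3 be an integer, R_* > 1, and let ρ be a regular metric on [1,R_*]. For c < ρ(1) define Λ(c) = exp( ∫_1^{R_*} dy / ( y·√( Ψ( c/(y^n·ρ(y)) ) ) ) ). Then Λ is continuous and strictly increasing on (−∞, ρ(1)), and Λ(c) → 1 as c → −∞. -/

import Mathlib

/-- A `C¹` function `ρ : [1,R₁] → (0,∞)` is a *regular metric* if `s ↦ ρ(s)sⁿ`
is nondecreasing on `[1,R₁]` (so its minimum is `ρ(1)`). -/
def IsRegularMetric (n : ℕ) (R₁ : ℝ) (ρ : ℝ → ℝ) : Prop :=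
  ContDiffOn ℝ 1 ρ (Set.Icc 1 R₁) ∧ (∀ s ∈ Set.Icc 1 R₁, 0 < ρ s) ∧
    MonotoneOn (fun s => ρ s * s ^ n) (Set.Icc 1 R₁)

open Real Set Filter MeasureTheory Topology

noncomputable def PhiAux (n : ℕ) (ζ : ℝ) : ℝ :=
  (1 - ζ) * (1 + ζ / ((n : ℝ) - 1)) ^ (((n : ℝ) - 2) / 2)

lemma phiAux_zero (n : ℕ) (hn : 3 ≤ n) : PhiAux n 0 = 1 := by
  have : ((n : ℝ) - 1) ≠ 0 := by
    have : (3:ℝ) ≤ (n:ℝ) := by exact_mod_cast hn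
    linarith
  simp [PhiAux]

lemma phiAux_strictAntiOn (n : ℕ) (hn : 3 ≤ n) : StrictAntiOn (PhiAux n) (Set.Ici 0) := by
  have hn3 : (3:ℝ) ≤ (n:ℝ) := by exact_mod_cast hn
  set p : ℝ := ((n : ℝ) - 2) / 2 with hp
  have hppos : 0 < p := by rw [hp]; linarith
  have hn1 : (0:ℝ) < (n:ℝ) - 1 := by linarith
  have hB : ∀ ζ : ℝ, 0 ≤ ζ → (0:ℝ) < 1 + ζ / ((n:ℝ) - 1) := by
    intro ζ hζ
    have : 0 ≤ ζ / ((n:ℝ) - 1) := div_nonneg hζ hn1.le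
    linarith
  have hder : ∀ ζ : ℝ, 0 ≤ ζ → HasDerivAt (PhiAux n)
      ((-1) * ((1 + ζ / ((n:ℝ)-1)) ^ p) +
        (1 - ζ) * (1 / ((n:ℝ)-1) * p * (1 + ζ / ((n:ℝ)-1)) ^ (p - 1))) ζ := by
    intro ζ hζ
    have h1 : HasDerivAt (fun x : ℝ => 1 - x) (-1) ζ := by
      simpa using (hasDerivAt_id ζ).const_sub 1
    have h2 : HasDerivAt (fun x : ℝ => 1 + x / ((n:ℝ)-1)) (1 / ((n:ℝ)-1)) ζ := by
      simpa using ((hasDerivAt_id ζ).div_const ((n:ℝ)-1)).const_add 1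
    have h3 : HasDerivAt (fun x : ℝ => (1 + x / ((n:ℝ)-1)) ^ p)
        (1 / ((n:ℝ)-1) * p * (1 + ζ / ((n:ℝ)-1)) ^ (p - 1)) ζ :=
      h2.rpow_const (Or.inl (hB ζ hζ).ne')
    show HasDerivAt (fun x : ℝ => (1 - x) * (1 + x / ((n:ℝ)-1)) ^ p) _ ζ
    exact h1.mul h3
  apply strictAntiOn_of_deriv_neg (convex_Ici 0)
  · exact fun ζ hζ => ((hder ζ hζ).continuousAt).continuousWithinAt
  · intro ζ hζ
    rw [interior_Ici] at hζ
    rw [(hder ζ hζ.le).deriv]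
    have hBpos := hB ζ hζ.le
    have hBp1 : (0:ℝ) < (1 + ζ / ((n:ℝ)-1)) ^ (p - 1) := Real.rpow_pos_of_pos hBpos _
    have hsplit : (1 + ζ / ((n:ℝ)-1)) ^ p
        = (1 + ζ / ((n:ℝ)-1)) ^ (p - 1) * (1 + ζ / ((n:ℝ)-1)) := by
      rw [← Real.rpow_add_one hBpos.ne' (p - 1)]; norm_num
    rw [hsplit]
    have hζ0 : (0:ℝ) < ζ := hζ
    have hupos : (0:ℝ) < 1 / ((n:ℝ)-1) := by positivity
    have hu : (1 / ((n:ℝ)-1)) * ((n:ℝ)-1) = 1 := one_div_mul_cancel hn1.ne'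
    have hbr : (1 - ζ) * (1 / ((n:ℝ)-1) * p) - (1 + ζ / ((n:ℝ)-1)) < 0 := by
      rw [hp, div_eq_mul_one_div ζ ((n:ℝ)-1)]
      nlinarith [mul_pos hupos hζ0, hu, hζ0, hn3, hupos]
    nlinarith [mul_neg_of_pos_of_neg hBp1 hbr]

lemma psi_pos (n : ℕ) (hn : 3 ≤ n) (Ψ : ℝ → ℝ)
    (hΨ : ∀ ζ ≤ (1:ℝ), 0 ≤ Ψ ζ ∧ PhiAux n (Ψ ζ) = ζ) :
    ∀ ζ < (1:ℝ), 0 < Ψ ζ := by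
  intro ζ hζ
  rcases (hΨ ζ hζ.le).1.eq_or_lt with h | h
  · exfalso
    have h2 := (hΨ ζ hζ.le).2
    rw [← h, phiAux_zero n hn] at h2
    linarith
  · exact h

lemma psi_anti (n : ℕ) (hn : 3 ≤ n) (Ψ : ℝ → ℝ)
    (hΨ : ∀ ζ ≤ (1:ℝ), 0 ≤ Ψ ζ ∧ PhiAux n (Ψ ζ) = ζ) :
    ∀ ζ₁ ζ₂, ζ₁ < ζ₂ → ζ₂ ≤ 1 → Ψ ζ₂ < Ψ ζ₁ := by
  intro ζ₁ ζ₂ h12 h21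
  have h1 := hΨ ζ₁ (by linarith)
  have h2 := hΨ ζ₂ h21
  by_contra h
  push_neg at h
  rcases h.eq_or_lt with he | hl
  · rw [← h1.2, ← h2.2, he] at h12
    exact lt_irrefl _ h12
  · have := phiAux_strictAntiOn n hn h1.1 h2.1 hl
    rw [h1.2, h2.2] at this
    linarith

lemma psi_continuousAt (n : ℕ) (hn : 3 ≤ n) (Ψ : ℝ → ℝ)
    (hΨ : ∀ ζ ≤ (1:ℝ), 0 ≤ Ψ ζ ∧ PhiAux n (Ψ ζ) = ζ) :
    ∀ z < (1:ℝ), ContinuousAt Ψ z := by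
  intro z hz
  have hΦanti := phiAux_strictAntiOn n hn
  have hzΨ := hΨ z hz.le
  rw [ContinuousAt, Metric.tendsto_nhds]
  intro ε hε
  set t := Ψ z with ht
  have htmem : t ∈ Set.Ici (0:ℝ) := hzΨ.1
  have ha : PhiAux n (t + ε) < z := by
    have := hΦanti htmem (by simp only [Set.mem_Ici]; linarith) (by linarith : t < t + ε)
    rwa [hzΨ.2] at this
  obtain ⟨b, hzb, hlow⟩ : ∃ b, z < b ∧ ∀ ζ, ζ ≤ 1 → ζ < b → t - ε < Ψ ζ := by
    by_cases hte : ε ≤ t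
    · refine ⟨PhiAux n (t - ε), ?_, ?_⟩
      · have := hΦanti (by simp only [Set.mem_Ici]; linarith) htmem (by linarith : t - ε < t)
        rwa [hzΨ.2] at this
      · intro ζ hζ1 hζb
        by_contra h
        push_neg at h
        have := (hΦanti.antitoneOn (hΨ ζ hζ1).1 (by simp only [Set.mem_Ici]; linarith) h)
        rw [(hΨ ζ hζ1).2] at this
        linarith
    · refine ⟨z + 1, by linarith, fun ζ hζ1 _ => ?_⟩
      have := (hΨ ζ hζ1).1
      linarith
  have hU : Set.Ioo (PhiAux n (t + ε)) b ∩ Set.Iio 1 ∈ 𝓝 z :=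
    (isOpen_Ioo.inter isOpen_Iio).mem_nhds ⟨⟨ha, hzb⟩, hz⟩
  filter_upwards [hU] with ζ hζmem
  obtain ⟨⟨h1, h2⟩, h3⟩ := hζmem
  have hζ1 : ζ ≤ 1 := h3.le
  have hup : Ψ ζ < t + ε := by
    by_contra h
    push_neg at h
    have := hΦanti.antitoneOn (by simp only [Set.mem_Ici]; linarith : t + ε ∈ Set.Ici (0:ℝ))
      (hΨ ζ hζ1).1 h
    rw [(hΨ ζ hζ1).2] at this
    linarith
  have hlo := hlow ζ hζ1 h2
  rw [Real.dist_eq, abs_lt]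
  constructor <;> [linarith; linarith]

lemma phiAux_le_one (n : ℕ) (hn : 3 ≤ n) {K : ℝ} (hK : 0 ≤ K) : PhiAux n K ≤ 1 := by
  rcases hK.eq_or_lt with h | h
  · rw [← h, phiAux_zero n hn]
  · have := phiAux_strictAntiOn n hn (le_refl (0:ℝ)) hK h
    rw [phiAux_zero n hn] at this
    exact this.le

lemma psi_phiAux (n : ℕ) (hn : 3 ≤ n) (Ψ : ℝ → ℝ)
    (hΨ : ∀ ζ ≤ (1:ℝ), 0 ≤ Ψ ζ ∧ PhiAux n (Ψ ζ) = ζ) {K : ℝ} (hK : 0 ≤ K) :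
    Ψ (PhiAux n K) = K := by
  have h := hΨ (PhiAux n K) (phiAux_le_one n hn hK)
  exact (phiAux_strictAntiOn n hn).injOn h.1 hK h.2

lemma psi_ge (n : ℕ) (hn : 3 ≤ n) (Ψ : ℝ → ℝ)
    (hΨ : ∀ ζ ≤ (1:ℝ), 0 ≤ Ψ ζ ∧ PhiAux n (Ψ ζ) = ζ) {K ζ : ℝ} (hK : 0 ≤ K)
    (hζ : ζ ≤ PhiAux n K) : K ≤ Ψ ζ := by
  rcases hζ.eq_or_lt with h | h
  · rw [h, psi_phiAux n hn Ψ hΨ hK]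
  · have := psi_anti n hn Ψ hΨ ζ (PhiAux n K) h (phiAux_le_one n hn hK)
    rw [psi_phiAux n hn Ψ hΨ hK] at this
    exact this.le

lemma phiAux_nonpos (n : ℕ) (hn : 3 ≤ n) {K : ℝ} (hK : 1 ≤ K) : PhiAux n K ≤ 0 := by
  have hn3 : (3:ℝ) ≤ (n:ℝ) := by exact_mod_cast hn
  have hn1 : (0:ℝ) < (n:ℝ) - 1 := by linarith
  have hb : (0:ℝ) < 1 + K / ((n:ℝ) - 1) := by
    have : 0 ≤ K / ((n:ℝ) - 1) := div_nonneg (by linarith) hn1.le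
    linarith
  exact mul_nonpos_of_nonpos_of_nonneg (by linarith) (Real.rpow_pos_of_pos hb _).le

/-- For a regular metric `ρ` on `[1,R_*]`, the function
`Λ(c) = exp(∫_1^{R_*} dy/(y √(Ψ(c/(yⁿ ρ(y))))))` is continuous and strictly increasing
on `(-∞, ρ(1))`, and `Λ(c) → 1` as `c → -∞`. Here `Ψ` is the inverse of
`Φ(ζ) = (1 - ζ)(1 + ζ/(n-1))^{(n-2)/2}`. -/
theorem stmt8 (n : ℕ) (hn : 3 ≤ n) (Rs : ℝ) (hRs : 1 < Rs)
    (ρ : ℝ → ℝ) (hρ : IsRegularMetric n Rs ρ)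
    (Ψ : ℝ → ℝ)
    (hΨ : ∀ ζ ≤ (1:ℝ), 0 ≤ Ψ ζ ∧
      (1 - Ψ ζ) * (1 + Ψ ζ / ((n : ℝ) - 1)) ^ (((n : ℝ) - 2) / 2) = ζ)
    (Λ : ℝ → ℝ)
    (hΛ : ∀ c < ρ 1, Λ c =
      Real.exp (∫ y in (1:ℝ)..Rs, 1 / (y * Real.sqrt (Ψ (c / (y ^ n * ρ y)))))) :
    ContinuousOn Λ (Set.Iio (ρ 1)) ∧ StrictMonoOn Λ (Set.Iio (ρ 1)) ∧
    Filter.Tendsto Λ Filter.atBot (nhds 1) := by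
  obtain ⟨hC1, hpos, hmono⟩ := hρ
  have hρ1 : 0 < ρ 1 := hpos 1 ⟨le_refl 1, hRs.le⟩
  have hΨ' : ∀ ζ ≤ (1:ℝ), 0 ≤ Ψ ζ ∧ PhiAux n (Ψ ζ) = ζ := hΨ
  have hρcont : ContinuousOn ρ (Set.Icc 1 Rs) := hC1.continuousOn
  have hDcont : ContinuousOn (fun y : ℝ => y ^ n * ρ y) (Set.Icc 1 Rs) :=
    (continuous_pow n).continuousOn.mul hρcont
  have hD : ∀ y ∈ Set.Icc (1:ℝ) Rs, ρ 1 ≤ y ^ n * ρ y := by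
    intro y hy
    have h := hmono ⟨le_refl 1, hRs.le⟩ hy hy.1
    simpa [mul_comm] using h
  have hDpos : ∀ y ∈ Set.Icc (1:ℝ) Rs, 0 < y ^ n * ρ y :=
    fun y hy => lt_of_lt_of_le hρ1 (hD y hy)
  have harg : ∀ c < ρ 1, ∀ y ∈ Set.Icc (1:ℝ) Rs, c / (y ^ n * ρ y) < 1 :=
    fun c hc y hy => (div_lt_one (hDpos y hy)).2 (lt_of_lt_of_le hc (hD y hy))
  have hΨpos := psi_pos n hn Ψ hΨ'
  have hFcont : ∀ c < ρ 1, ContinuousOn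
      (fun y => 1 / (y * Real.sqrt (Ψ (c / (y ^ n * ρ y))))) (Set.Icc 1 Rs) := by
    intro c hc
    have hg : ContinuousOn (fun y : ℝ => c / (y ^ n * ρ y)) (Set.Icc 1 Rs) :=
      continuousOn_const.div hDcont (fun y hy => (hDpos y hy).ne')
    have hΨon : ContinuousOn Ψ (Set.Iio 1) :=
      fun z hz => (psi_continuousAt n hn Ψ hΨ' z hz).continuousWithinAt
    have hΨg : ContinuousOn (fun y : ℝ => Ψ (c / (y ^ n * ρ y))) (Set.Icc 1 Rs) :=
      hΨon.comp hg fun y hy => harg c hc y hy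
    refine continuousOn_const.div
      (continuousOn_id.mul (Real.continuous_sqrt.comp_continuousOn hΨg)) ?_
    intro y hy
    have hy0 : (0:ℝ) < y := lt_of_lt_of_le zero_lt_one hy.1
    exact (mul_pos hy0 (Real.sqrt_pos.2 (hΨpos _ (harg c hc y hy)))).ne'
  have hFmono : ∀ c₁ c₂, c₁ < c₂ → c₂ < ρ 1 → ∀ y ∈ Set.Icc (1:ℝ) Rs,
      1 / (y * Real.sqrt (Ψ (c₁ / (y ^ n * ρ y)))) <
        1 / (y * Real.sqrt (Ψ (c₂ / (y ^ n * ρ y)))) := by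
    intro c₁ c₂ h12 h2 y hy
    have hy0 : (0:ℝ) < y := lt_of_lt_of_le zero_lt_one hy.1
    have hDy := hDpos y hy
    have harg2 := harg c₂ h2 y hy
    have harg1lt : c₁ / (y ^ n * ρ y) < c₂ / (y ^ n * ρ y) := by
      exact div_lt_div_of_pos_right h12 hDy
    have hΨlt : Ψ (c₂ / (y ^ n * ρ y)) < Ψ (c₁ / (y ^ n * ρ y)) :=
      psi_anti n hn Ψ hΨ' _ _ harg1lt harg2.le
    have hΨ2pos := hΨpos _ harg2
    have hs : Real.sqrt (Ψ (c₂ / (y ^ n * ρ y))) < Real.sqrt (Ψ (c₁ / (y ^ n * ρ y))) :=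
      Real.sqrt_lt_sqrt hΨ2pos.le hΨlt
    have hs2 : 0 < Real.sqrt (Ψ (c₂ / (y ^ n * ρ y))) := Real.sqrt_pos.2 hΨ2pos
    exact one_div_lt_one_div_of_lt (mul_pos hy0 hs2) ((mul_lt_mul_iff_right₀ hy0).2 hs)
  have hInt : ∀ c < ρ 1, IntervalIntegrable
      (fun y => 1 / (y * Real.sqrt (Ψ (c / (y ^ n * ρ y))))) MeasureTheory.volume 1 Rs :=
    fun c hc => (hFcont c hc).intervalIntegrable_of_Icc hRs.le
  refine ⟨?_, ?_, ?_⟩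
  · -- continuity
    have hG : ∀ c₀ ∈ Set.Iio (ρ 1), ContinuousAt
        (fun c => ∫ y in (1:ℝ)..Rs, 1 / (y * Real.sqrt (Ψ (c / (y ^ n * ρ y))))) c₀ := by
      intro c₀ hc₀
      simp only [Set.mem_Iio] at hc₀
      set c₁ := (c₀ + ρ 1) / 2 with hc₁def
      have hc₀1 : c₀ < c₁ := by rw [hc₁def]; linarith
      have hc₁ρ : c₁ < ρ 1 := by rw [hc₁def]; linarith
      have hsub : Set.uIoc (1:ℝ) Rs ⊆ Set.Icc 1 Rs := by
        rw [Set.uIoc_of_le hRs.le]; exact Set.Ioc_subset_Icc_self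
      apply intervalIntegral.continuousAt_of_dominated_interval
        (bound := fun y => 1 / (y * Real.sqrt (Ψ (c₁ / (y ^ n * ρ y)))))
      · filter_upwards [Iio_mem_nhds hc₀] with c hc
        exact ((hFcont c hc).mono hsub).aestronglyMeasurable measurableSet_uIoc
      · filter_upwards [Iio_mem_nhds hc₀1] with c hc
        refine Filter.Eventually.of_forall fun t ht => ?_
        have ht' : t ∈ Set.Icc 1 Rs := hsub ht
        have ht0 : (0:ℝ) < t := lt_of_lt_of_le zero_lt_one ht'.1
        have hnn : 0 ≤ 1 / (t * Real.sqrt (Ψ (c / (t ^ n * ρ t)))) :=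
          one_div_nonneg.2 (mul_nonneg ht0.le (Real.sqrt_nonneg _))
        rw [Real.norm_of_nonneg hnn]
        exact (hFmono c c₁ hc hc₁ρ t ht').le
      · exact hInt c₁ hc₁ρ
      · refine Filter.Eventually.of_forall fun t ht => ?_
        have ht' : t ∈ Set.Icc 1 Rs := hsub ht
        have ht0 : (0:ℝ) < t := lt_of_lt_of_le zero_lt_one ht'.1
        have hargc : c₀ / (t ^ n * ρ t) < 1 := harg c₀ hc₀ t ht'
        have hdiv : ContinuousAt (fun c : ℝ => c / (t ^ n * ρ t)) c₀ :=
          continuousAt_id.div_const _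
        have h1 : ContinuousAt (fun c : ℝ => Ψ (c / (t ^ n * ρ t))) c₀ :=
          ContinuousAt.comp (psi_continuousAt n hn Ψ hΨ' _ hargc) hdiv
        have h2 : ContinuousAt (fun c : ℝ => t * Real.sqrt (Ψ (c / (t ^ n * ρ t)))) c₀ :=
          continuousAt_const.mul (Real.continuous_sqrt.continuousAt.comp h1)
        have hne : t * Real.sqrt (Ψ (c₀ / (t ^ n * ρ t))) ≠ 0 :=
          (mul_pos ht0 (Real.sqrt_pos.2 (hΨpos _ hargc))).ne'
        exact continuousAt_const.div h2 hne
    have hcont : ContinuousOn (fun c => Real.exp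
        (∫ y in (1:ℝ)..Rs, 1 / (y * Real.sqrt (Ψ (c / (y ^ n * ρ y)))))) (Set.Iio (ρ 1)) :=
      fun c hc => (Real.continuous_exp.continuousAt.comp (hG c hc)).continuousWithinAt
    exact hcont.congr fun c hc => hΛ c hc
  · -- strict monotonicity
    intro c₁ hc₁ c₂ hc₂ h12
    simp only [Set.mem_Iio] at hc₁ hc₂
    rw [hΛ c₁ hc₁, hΛ c₂ hc₂]
    apply Real.exp_lt_exp.2
    have hpos' : 0 < ∫ y in (1:ℝ)..Rs,
        (1 / (y * Real.sqrt (Ψ (c₂ / (y ^ n * ρ y)))) -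
          1 / (y * Real.sqrt (Ψ (c₁ / (y ^ n * ρ y))))) :=
      intervalIntegral.intervalIntegral_pos_of_pos_on ((hInt c₂ hc₂).sub (hInt c₁ hc₁))
        (fun y hy => sub_pos.2 (hFmono c₁ c₂ h12 hc₂ y ⟨hy.1.le, hy.2.le⟩)) hRs
    rw [intervalIntegral.integral_sub (hInt c₂ hc₂) (hInt c₁ hc₁)] at hpos'
    linarith
  · -- limit at -∞
    obtain ⟨y₀, hy₀, hM'⟩ := (isCompact_Icc : IsCompact (Set.Icc (1:ℝ) Rs)).exists_isMaxOn
      (Set.nonempty_Icc.2 hRs.le) hDcont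
    have hM : ∀ y ∈ Set.Icc (1:ℝ) Rs, y ^ n * ρ y ≤ y₀ ^ n * ρ y₀ := hM'
    set M := y₀ ^ n * ρ y₀ with hMdef
    have hMpos : 0 < M := hDpos y₀ hy₀
    have hInonneg : ∀ c : ℝ, 0 ≤ ∫ y in (1:ℝ)..Rs,
        1 / (y * Real.sqrt (Ψ (c / (y ^ n * ρ y)))) := by
      intro c
      apply intervalIntegral.integral_nonneg hRs.le
      intro y hy
      exact one_div_nonneg.2 (mul_nonneg (le_trans zero_le_one hy.1) (Real.sqrt_nonneg _))
    have hbound : ∀ K : ℝ, 1 ≤ K → ∀ c : ℝ, c ≤ M * PhiAux n K → c < ρ 1 →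
        (∫ y in (1:ℝ)..Rs, 1 / (y * Real.sqrt (Ψ (c / (y ^ n * ρ y))))) ≤
          (Rs - 1) * (1 / Real.sqrt K) := by
      intro K hK c hcM hcρ
      have hK0 : (0:ℝ) < K := by linarith
      have hΦK : PhiAux n K ≤ 0 := phiAux_nonpos n hn hK
      have hpt : ∀ y ∈ Set.Icc (1:ℝ) Rs,
          1 / (y * Real.sqrt (Ψ (c / (y ^ n * ρ y)))) ≤ 1 / Real.sqrt K := by
        intro y hy
        have hy0 : (0:ℝ) < y := lt_of_lt_of_le zero_lt_one hy.1
        have hDy := hDpos y hy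
        have h1 : c ≤ (y ^ n * ρ y) * PhiAux n K :=
          hcM.trans (mul_le_mul_of_nonpos_right (hM y hy) hΦK)
        have h2 : c / (y ^ n * ρ y) ≤ PhiAux n K :=
          (div_le_iff₀ hDy).2 (h1.trans_eq (mul_comm _ _))
        have h3 : K ≤ Ψ (c / (y ^ n * ρ y)) := psi_ge n hn Ψ hΨ' hK0.le h2
        have h5 : Real.sqrt K ≤ y * Real.sqrt (Ψ (c / (y ^ n * ρ y))) := by
          calc Real.sqrt K ≤ Real.sqrt (Ψ (c / (y ^ n * ρ y))) := Real.sqrt_le_sqrt h3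
          _ = 1 * Real.sqrt (Ψ (c / (y ^ n * ρ y))) := (one_mul _).symm
          _ ≤ y * Real.sqrt (Ψ (c / (y ^ n * ρ y))) :=
              mul_le_mul_of_nonneg_right hy.1 (Real.sqrt_nonneg _)
        exact one_div_le_one_div_of_le (Real.sqrt_pos.2 hK0) h5
      calc (∫ y in (1:ℝ)..Rs, 1 / (y * Real.sqrt (Ψ (c / (y ^ n * ρ y)))))
          ≤ ∫ _ in (1:ℝ)..Rs, 1 / Real.sqrt K :=
            intervalIntegral.integral_mono_on hRs.le (hInt c hcρ)
              intervalIntegrable_const hpt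
        _ = (Rs - 1) * (1 / Real.sqrt K) := by
            simp [intervalIntegral.integral_const, smul_eq_mul]
    have hI0 : Filter.Tendsto
        (fun c => ∫ y in (1:ℝ)..Rs, 1 / (y * Real.sqrt (Ψ (c / (y ^ n * ρ y)))))
        Filter.atBot (𝓝 0) := by
      rw [Metric.tendsto_nhds]
      intro ε hε
      set K := ((Rs - 1) / ε) ^ 2 + 1 with hKdef
      have hq : (0:ℝ) ≤ (Rs - 1) / ε := div_nonneg (by linarith) hε.le
      have hK1 : (1:ℝ) ≤ K := by rw [hKdef]; nlinarith [sq_nonneg ((Rs - 1) / ε)]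
      have h1 : (Rs - 1) / ε < Real.sqrt K := by
        have h := Real.sqrt_lt_sqrt (sq_nonneg ((Rs - 1) / ε))
          (by rw [hKdef]; linarith : ((Rs - 1) / ε) ^ 2 < K)
        rwa [Real.sqrt_sq hq] at h
      have hsKpos : 0 < Real.sqrt K := lt_of_le_of_lt hq h1
      have hKlt : (Rs - 1) * (1 / Real.sqrt K) < ε := by
        rw [mul_one_div, div_lt_iff₀ hsKpos]
        have := (div_lt_iff₀ hε).1 h1
        linarith
      filter_upwards [Filter.eventually_lt_atBot (ρ 1),
        Filter.eventually_le_atBot (M * PhiAux n K)] with c hc1 hc2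
      rw [Real.dist_eq, sub_zero, abs_of_nonneg (hInonneg c)]
      exact lt_of_le_of_lt (hbound K hK1 c hc2 hc1) hKlt
    have hexp : Filter.Tendsto (fun c => Real.exp
        (∫ y in (1:ℝ)..Rs, 1 / (y * Real.sqrt (Ψ (c / (y ^ n * ρ y))))))
        Filter.atBot (𝓝 1) := by
      have h := Real.continuous_exp.continuousAt.tendsto.comp hI0
      rwa [Real.exp_zero] at h
    apply Filter.Tendsto.congr' ?_ hexp
    filter_upwards [Filter.eventually_lt_atBot (ρ 1)] with c hc
    exact (hΛ c hc).symm
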